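/- Fix an integer L ≥ 4 divisible by 4, a real C > 0 and an integer p ≥ 1 with C/√p ≤ π. If a configuration φ is such that every bond (x,y) in E₂₃ satisfies dist(φ_x, φ_y) ≥ C/√p, then H_{p,J}(φ) ≥ −J·L²·(1 + exp(−C²/4)) for every J > 0; in particular exp(−β H_{p,J}(φ)) ≤ exp(βJ·L²·(1 + exp(−C²/4))) for every β ≥ 0. -/

import Mathlib

open MeasureTheory Real

/-- The site space: the discrete torus of side `L`. -/
abbrev Torus (L : ℕ) := ZMod L × ZMod L

/-- A configuration of the non-linear model: one spin in the circle `ℝ/2πℤ` per site. -/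
abbrev NLConfig (L : ℕ) := Torus L → AddCircle (2 * Real.pi)

/-- The two unit coordinate vectors `e₁ = (1,0)` and `e₂ = (0,1)`. -/
def coordVec (L : ℕ) : Fin 2 → Torus L
  | 0 => (1, 0)
  | 1 => (0, 1)

instance : Fact ((0 : ℝ) < 2 * Real.pi) := ⟨by positivity⟩

/-- The product of normalized Haar measures on the spins. -/
noncomputable def nlMeasure (L : ℕ) [NeZero L] : Measure (NLConfig L) :=
  Measure.pi fun _ => (AddCircle.haarAddCircle : Measure (AddCircle (2 * Real.pi)))

/-- The non-linear Hamiltonian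
`H_{p,J}(φ) = −J·Σ_{bonds (x,y)} ((1 + cos(φ_x − φ_y))/2)^p`. -/
noncomputable def nlH (L : ℕ) [NeZero L] (p : ℕ) (J : ℝ) (φ : NLConfig L) : ℝ :=
  -J * ∑ x : Torus L, ∑ i : Fin 2,
    ((1 + Real.Angle.cos (φ x - φ (x + coordVec L i))) / 2) ^ p

/-- The non-linear model partition function. -/
noncomputable def nlZ (L : ℕ) [NeZero L] (β J : ℝ) (p : ℕ) : ℝ :=
  ∫ φ, Real.exp (-β * nlH L p J φ) ∂(nlMeasure L)

/-- The residue `(x₁ + x₂) mod 4` of a site of the torus, well defined when `4 ∣ L`. -/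
def residue4 (L : ℕ) (h : (4 : ℕ) ∣ L) (x : Torus L) : ZMod 4 :=
  ZMod.castHom h (ZMod 4) (x.1 + x.2)

/-- A bond `(x, x + eᵢ)` belongs to `E₀₁` iff `(x₁ + x₂) mod 4 ∈ {0, 1}`;
`E₂₃` consists of the remaining bonds. -/
def InE01 (L : ℕ) (h : (4 : ℕ) ∣ L) (x : Torus L) : Prop :=
  residue4 L h x = 0 ∨ residue4 L h x = 1

/-! ### Auxiliary lemmas -/

instance (L : ℕ) (h : (4:ℕ) ∣ L) : DecidablePred (InE01 L h) :=
  fun _ => inferInstanceAs (Decidable (_ ∨ _))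

/-- Nonnegativity on `[0, ∞)` of a function vanishing at `0` whose derivative is
nonnegative on `[0, ∞)`. -/
lemma nl_mono_aux {f f' : ℝ → ℝ} (hf : ∀ x, HasDerivAt f (f' x) x) (h0 : f 0 = 0)
    (hf' : ∀ x, 0 ≤ x → 0 ≤ f' x) : ∀ x, 0 ≤ x → 0 ≤ f x := by
  have hm : MonotoneOn f (Set.Ici (0:ℝ)) := by
    apply monotoneOn_of_deriv_nonneg (convex_Ici 0)
      (fun x _ => (hf x).continuousAt.continuousWithinAt)
      (fun x _ => (hf x).differentiableAt.differentiableWithinAt)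
    intro x hx
    rw [(hf x).deriv]
    exact hf' x (le_of_lt (by simpa using hx))
  intro x hx
  have := hm (Set.self_mem_Ici) hx hx
  rwa [h0] at this

lemma nl_exp_neg_cubic (t : ℝ) (ht : 0 ≤ t) : 1 - t + t^2/2 - t^3/6 ≤ Real.exp (-t) := by
  have he : ∀ s : ℝ, HasDerivAt (fun s : ℝ => Real.exp (-s)) (-Real.exp (-s)) s := by
    intro s
    simpa [Function.comp_def] using (Real.hasDerivAt_exp (-s)).comp s ((hasDerivAt_id s).neg)
  have h1 : ∀ s : ℝ, 0 ≤ s → 0 ≤ Real.exp (-s) - 1 + s := by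
    intro s _
    have := Real.add_one_le_exp (-s)
    linarith
  have h2 : ∀ s : ℝ, 0 ≤ s → 0 ≤ -Real.exp (-s) + 1 - s + s^2/2 := by
    apply nl_mono_aux (f := fun s => -Real.exp (-s) + 1 - s + s^2/2)
      (f' := fun s => Real.exp (-s) - 1 + s)
    · intro s
      have := ((((he s).neg).add_const (1:ℝ)).sub (hasDerivAt_id' s)).add
        ((hasDerivAt_pow 2 s).div_const 2)
      refine this.congr_deriv ?_
      push_cast; ring
    · norm_num
    · exact h1
  have h3 : 0 ≤ Real.exp (-t) - 1 + t - t^2/2 + t^3/6 := by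
    refine nl_mono_aux (f := fun s => Real.exp (-s) - 1 + s - s^2/2 + s^3/6)
      (f' := fun s => -Real.exp (-s) + 1 - s + s^2/2) ?_ (by norm_num) h2 t ht
    intro s
    have := ((((he s).sub_const (1:ℝ)).add (hasDerivAt_id' s)).sub
      ((hasDerivAt_pow 2 s).div_const 2)).add ((hasDerivAt_pow 3 s).div_const 6)
    refine this.congr_deriv ?_
    push_cast; ring
  linarith

lemma nl_cos_le_quartic (x : ℝ) (hx : 0 ≤ x) : Real.cos x ≤ 1 - x^2/2 + x^4/24 := by
  have h1 : ∀ s : ℝ, 0 ≤ s → 0 ≤ -1 + s^2/2 + Real.cos s := by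
    intro s _
    have := Real.one_sub_sq_div_two_le_cos (x := s)
    linarith
  have h2 : ∀ s : ℝ, 0 ≤ s → 0 ≤ -s + s^3/6 + Real.sin s := by
    apply nl_mono_aux (f := fun s => -s + s^3/6 + Real.sin s)
      (f' := fun s => -1 + s^2/2 + Real.cos s)
    · intro s
      have := (((hasDerivAt_id' s).neg).add
        ((hasDerivAt_pow 3 s).div_const 6)).add (Real.hasDerivAt_sin s)
      refine this.congr_deriv ?_
      push_cast; ring
    · norm_num
    · exact h1
  have h3 : 0 ≤ 1 - x^2/2 + x^4/24 - Real.cos x := by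
    refine nl_mono_aux (f := fun s => 1 - s^2/2 + s^4/24 - Real.cos s)
      (f' := fun s => -s + s^3/6 + Real.sin s) ?_ (by norm_num) h2 x hx
    intro s
    have := (((hasDerivAt_const s (1:ℝ)).sub ((hasDerivAt_pow 2 s).div_const 2)).add
      ((hasDerivAt_pow 4 s).div_const 24)).sub (Real.hasDerivAt_cos s)
    refine this.congr_deriv ?_
    push_cast; ring
  linarith

lemma nl_cos_le_exp_neg_sq (x : ℝ) (h0 : 0 ≤ x) (h2 : x ≤ π/2) :
    Real.cos x ≤ Real.exp (-(x^2)/2) := by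
  have hq := nl_cos_le_quartic x h0
  have he := nl_exp_neg_cubic (x^2/2) (by positivity)
  have hx2 : x^2 ≤ 4 := by nlinarith [Real.pi_lt_d2, Real.pi_pos]
  have hmid : 1 - x^2/2 + x^4/24 ≤ 1 - x^2/2 + (x^2/2)^2/2 - (x^2/2)^3/6 := by
    nlinarith [pow_nonneg h0 4]
  calc Real.cos x ≤ 1 - x^2/2 + x^4/24 := hq
    _ ≤ 1 - x^2/2 + (x^2/2)^2/2 - (x^2/2)^3/6 := hmid
    _ ≤ Real.exp (-(x^2/2)) := he
    _ = Real.exp (-(x^2)/2) := by ring_nf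

lemma nl_dist_angle (a b : AddCircle (2 * π)) :
    dist a b = |Real.Angle.toReal (a - b)| := by
  rw [dist_eq_norm]
  have h1 : a - b = ((Real.Angle.toReal (a - b) : ℝ) : AddCircle (2 * π)) :=
    (Real.Angle.coe_toReal (a - b)).symm
  have h2 : ‖((Real.Angle.toReal (a - b) : ℝ) : AddCircle (2 * π))‖
      = |Real.Angle.toReal (a - b)| := by
    rw [AddCircle.norm_coe_eq_abs_iff _ (by positivity)]
    have := Real.Angle.abs_toReal_le_pi (a - b)
    rw [abs_of_pos (by positivity : (0:ℝ) < 2 * π)]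
    linarith
  rw [← h2]
  congr 1

lemma nl_bond_bound (C : ℝ) (hC : 0 < C) (p : ℕ) (hp : 1 ≤ p)
    (θ : AddCircle (2 * π)) (hd : C / Real.sqrt p ≤ |Real.Angle.toReal θ|) :
    ((1 + Real.Angle.cos θ) / 2) ^ p ≤ Real.exp (-(C ^ 2) / 4) := by
  set d : ℝ := |Real.Angle.toReal θ| with hdef
  have hd0 : 0 ≤ d := abs_nonneg _
  have hdpi : d ≤ π := Real.Angle.abs_toReal_le_pi θ
  have hcos : Real.Angle.cos θ = Real.cos d := by
    refine (Real.Angle.cos_toReal θ).symm.trans ?_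
    rcases abs_cases (Real.Angle.toReal θ) with ⟨h, _⟩ | ⟨h, _⟩
    · rw [hdef, h]
    · rw [hdef, h, Real.cos_neg]
  have hsq : (1 + Real.cos d) / 2 = Real.cos (d/2) ^ 2 := by
    rw [Real.cos_sq]
    ring_nf
  have hc0 : 0 ≤ Real.cos (d/2) :=
    Real.cos_nonneg_of_mem_Icc ⟨by linarith [Real.pi_pos], by linarith⟩
  have hce : Real.cos (d/2) ≤ Real.exp (-((d/2)^2)/2) :=
    nl_cos_le_exp_neg_sq _ (by linarith) (by linarith)
  have hsqle : Real.cos (d/2) ^ 2 ≤ Real.exp (-(d^2)/4) := by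
    have := pow_le_pow_left₀ hc0 hce 2
    calc Real.cos (d/2)^2 ≤ (Real.exp (-((d/2)^2)/2))^2 := this
      _ = Real.exp (-(d^2)/4) := by
        rw [← Real.exp_nat_mul]
        norm_num
        ring_nf
  have hCd : C ^ 2 ≤ p * d ^ 2 := by
    have hsp : 0 < Real.sqrt p := Real.sqrt_pos.2 (by positivity)
    have h1 : C ≤ d * Real.sqrt p := by
      rw [div_le_iff₀ hsp] at hd
      exact hd
    have := mul_self_le_mul_self hC.le h1
    calc C ^ 2 = C * C := sq C
      _ ≤ (d * Real.sqrt p) * (d * Real.sqrt p) := this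
      _ = p * d ^ 2 := by
        rw [mul_mul_mul_comm, Real.mul_self_sqrt (by positivity)]
        ring
  calc ((1 + Real.Angle.cos θ) / 2) ^ p = (Real.cos (d/2)^2)^p := by rw [hcos, hsq]
    _ ≤ (Real.exp (-(d^2)/4))^p := pow_le_pow_left₀ (by positivity) hsqle p
    _ = Real.exp (p * (-(d^2)/4)) := by rw [← Real.exp_nat_mul]
    _ ≤ Real.exp (-(C^2)/4) := by
        apply Real.exp_le_exp.2
        have : (1:ℝ) ≤ p := by exact_mod_cast hp
        nlinarith

lemma nl_residue_shift (L : ℕ) (hdvd : (4:ℕ) ∣ L) (x : Torus L) :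
    residue4 L hdvd (x + ((1 : ZMod L), (0 : ZMod L))) = residue4 L hdvd x + 1 := by
  simp [residue4, Prod.fst_add, Prod.snd_add, map_add, map_one]
  ring

open Finset in
lemma nl_card_shift (L : ℕ) [NeZero L] (hdvd : (4:ℕ) ∣ L) (r : ZMod 4) :
    (univ.filter (fun x : Torus L => residue4 L hdvd x = r)).card
      = (univ.filter (fun x : Torus L => residue4 L hdvd x = r + 1)).card := by
  apply Finset.card_bij' (fun x _ => x + ((1 : ZMod L), (0 : ZMod L)))
    (fun x _ => x - ((1 : ZMod L), (0 : ZMod L)))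
  · intro a ha
    simp only [mem_filter, mem_univ, true_and] at ha ⊢
    rw [nl_residue_shift, ha]
  · intro a ha
    simp only [mem_filter, mem_univ, true_and] at ha ⊢
    have h2 := nl_residue_shift L hdvd (a - ((1 : ZMod L), (0 : ZMod L)))
    rw [sub_add_cancel, ha] at h2
    exact (add_right_cancel h2.symm)
  · intro a _; exact add_sub_cancel_right a _
  · intro a _; exact sub_add_cancel a _

open Finset in
lemma nl_two_mul_card_In (L : ℕ) [NeZero L] (hdvd : (4:ℕ) ∣ L) :
    2 * (univ.filter (fun x : Torus L => InE01 L hdvd x)).card = L ^ 2 := by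
  set n : ZMod 4 → ℕ := fun r => (univ.filter (fun x : Torus L => residue4 L hdvd x = r)).card
    with hn
  have hshift : ∀ r, n r = n (r + 1) := nl_card_shift L hdvd
  have hdisj : ∀ r s : ZMod 4, r ≠ s →
      Disjoint (univ.filter (fun x : Torus L => residue4 L hdvd x = r))
        (univ.filter (fun x : Torus L => residue4 L hdvd x = s)) := by
    intro r s hrs
    rw [Finset.disjoint_filter]
    intro x _ h0 h1
    exact hrs (h0 ▸ h1 ▸ rfl)
  have hIn : (univ.filter (fun x : Torus L => InE01 L hdvd x)).card = n 0 + n 1 := by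
    have he : (univ.filter (fun x : Torus L => InE01 L hdvd x))
        = (univ.filter (fun x : Torus L => residue4 L hdvd x = 0))
          ∪ (univ.filter (fun x : Torus L => residue4 L hdvd x = 1)) := by
      rw [← Finset.filter_or]
      apply Finset.filter_congr
      intro x _
      exact Iff.rfl
    rw [he, Finset.card_union_of_disjoint (hdisj 0 1 (by decide))]
  have hOut : (univ.filter (fun x : Torus L => ¬ InE01 L hdvd x)).card = n 2 + n 3 := by
    have he : (univ.filter (fun x : Torus L => ¬ InE01 L hdvd x))
        = (univ.filter (fun x : Torus L => residue4 L hdvd x = 2))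
          ∪ (univ.filter (fun x : Torus L => residue4 L hdvd x = 3)) := by
      rw [← Finset.filter_or]
      apply Finset.filter_congr
      intro x _
      unfold InE01
      generalize residue4 L hdvd x = r
      revert r; decide
    rw [he, Finset.card_union_of_disjoint (hdisj 2 3 (by decide))]
  have htot : (univ.filter (fun x : Torus L => InE01 L hdvd x)).card
      + (univ.filter (fun x : Torus L => ¬ InE01 L hdvd x)).card = L ^ 2 := by
    rw [Finset.card_filter_add_card_filter_not]
    simp [Finset.card_univ, ZMod.card, sq]
  have e1 : n 0 = n 1 := hshift 0
  have e2 : n 1 = n 2 := by have h := hshift 1; rwa [show (1:ZMod 4) + 1 = 2 from by decide] at h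
  have e3 : n 2 = n 3 := by have h := hshift 2; rwa [show (2:ZMod 4) + 1 = 3 from by decide] at h
  omega

/-- if every bond of `E₂₃` is `C/√p`-disordered, then the non-linear
Hamiltonian is bounded below by `−J·L²·(1 + exp(−C²/4))`, and consequently the
Boltzmann weight is bounded above by `exp(βJ·L²·(1 + exp(−C²/4)))`. -/
theorem nl_Asharp_energy_bound (L : ℕ) (hdvd : (4 : ℕ) ∣ L) (hL : 4 ≤ L)
    (C : ℝ) (hC : 0 < C) (p : ℕ) (hp : 1 ≤ p)
    (hCp : C / Real.sqrt p ≤ Real.pi) :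
    haveI : NeZero L := ⟨by omega⟩
    ∀ φ : NLConfig L,
      (∀ x : Torus L, ∀ i : Fin 2, ¬ InE01 L hdvd x →
        C / Real.sqrt p ≤ dist (φ x) (φ (x + coordVec L i))) →
      ∀ J : ℝ, 0 < J →
        nlH L p J φ ≥ -(J * L ^ 2 * (1 + Real.exp (-(C ^ 2) / 4))) ∧
        ∀ β : ℝ, 0 ≤ β →
          Real.exp (-β * nlH L p J φ) ≤
            Real.exp (β * J * L ^ 2 * (1 + Real.exp (-(C ^ 2) / 4))) := by
  haveI : NeZero L := ⟨by omega⟩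
  intro φ hφ J hJ
  set E : ℝ := Real.exp (-(C ^ 2) / 4) with hE
  have hE0 : 0 < E := Real.exp_pos _
  set t : Torus L → Fin 2 → ℝ :=
    fun x i => ((1 + Real.Angle.cos (φ x - φ (x + coordVec L i))) / 2) ^ p with ht
  have hbase : ∀ θ : AddCircle (2 * π), 0 ≤ (1 + Real.Angle.cos θ) / 2
      ∧ (1 + Real.Angle.cos θ) / 2 ≤ 1 := by
    intro θ
    have h1 : Real.Angle.cos θ = Real.cos (Real.Angle.toReal θ) :=
      (Real.Angle.cos_toReal θ).symm
    constructor
    · rw [h1]; linarith [Real.neg_one_le_cos (Real.Angle.toReal θ)]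
    · rw [h1]; linarith [Real.cos_le_one (Real.Angle.toReal θ)]
  have ht1 : ∀ x i, t x i ≤ 1 := fun x i =>
    pow_le_one₀ (hbase _).1 (hbase _).2
  have ht2 : ∀ x i, ¬ InE01 L hdvd x → t x i ≤ E := by
    intro x i hx
    have hd := hφ x i hx
    rw [nl_dist_angle] at hd
    exact nl_bond_bound C hC p hp _ hd
  -- bound on the total sum
  classical
  have hsum1 : ∑ x : Torus L, ∑ i : Fin 2, t x i
      ≤ ∑ x : Torus L, (if InE01 L hdvd x then (2:ℝ) else 2 * E) := by
    apply Finset.sum_le_sum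
    intro x _
    by_cases h : InE01 L hdvd x
    · rw [if_pos h, Fin.sum_univ_two]
      linarith [ht1 x 0, ht1 x 1]
    · rw [if_neg h, Fin.sum_univ_two]
      linarith [ht2 x 0 h, ht2 x 1 h]
  have hsum2 : ∑ x : Torus L, (if InE01 L hdvd x then (2:ℝ) else 2 * E)
      = ((Finset.univ.filter (fun x : Torus L => InE01 L hdvd x)).card : ℝ) * 2
        + ((Finset.univ.filter (fun x : Torus L => ¬ InE01 L hdvd x)).card : ℝ) * (2 * E) := by
    rw [Finset.sum_ite, Finset.sum_const, Finset.sum_const, nsmul_eq_mul, nsmul_eq_mul]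
  have hcardIn := nl_two_mul_card_In L hdvd
  have hcardTot : (Finset.univ.filter (fun x : Torus L => InE01 L hdvd x)).card
      + (Finset.univ.filter (fun x : Torus L => ¬ InE01 L hdvd x)).card = L ^ 2 := by
    rw [Finset.card_filter_add_card_filter_not]
    simp [Finset.card_univ, ZMod.card, sq]
  have hcardOut : 2 * (Finset.univ.filter (fun x : Torus L => ¬ InE01 L hdvd x)).card
      = L ^ 2 := by omega
  have hS : ∑ x : Torus L, ∑ i : Fin 2, t x i ≤ (L:ℝ) ^ 2 * (1 + E) := by
    have hIn : ((Finset.univ.filter (fun x : Torus L => InE01 L hdvd x)).card : ℝ) * 2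
        = (L:ℝ) ^ 2 := by
      have h : (Finset.univ.filter (fun x : Torus L => InE01 L hdvd x)).card * 2 = L ^ 2 := by
        omega
      exact_mod_cast h
    have hOut : ((Finset.univ.filter (fun x : Torus L => ¬ InE01 L hdvd x)).card : ℝ) * 2
        = (L:ℝ) ^ 2 := by
      have h : (Finset.univ.filter (fun x : Torus L => ¬ InE01 L hdvd x)).card * 2 = L ^ 2 := by
        omega
      exact_mod_cast h
    calc ∑ x : Torus L, ∑ i : Fin 2, t x i
        ≤ ∑ x : Torus L, (if InE01 L hdvd x then (2:ℝ) else 2 * E) := hsum1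
      _ = ((Finset.univ.filter (fun x : Torus L => InE01 L hdvd x)).card : ℝ) * 2
          + ((Finset.univ.filter (fun x : Torus L => ¬ InE01 L hdvd x)).card : ℝ) * (2 * E) :=
          hsum2
      _ = (L:ℝ) ^ 2 * (1 + E) := by
          rw [show ((Finset.univ.filter (fun x : Torus L => ¬ InE01 L hdvd x)).card : ℝ) * (2 * E)
            = ((Finset.univ.filter (fun x : Torus L => ¬ InE01 L hdvd x)).card : ℝ) * 2 * E
            from by ring, hIn, hOut]
          ring
  have hH : nlH L p J φ ≥ -(J * L ^ 2 * (1 + E)) := by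
    rw [nlH]
    have := mul_le_mul_of_nonneg_left hS hJ.le
    nlinarith
  refine ⟨hH, ?_⟩
  intro β hβ
  apply Real.exp_le_exp.2
  have h2 : -(nlH L p J φ) ≤ J * (L:ℝ) ^ 2 * (1 + E) := by linarith
  have h3 : β * (-(nlH L p J φ)) ≤ β * (J * (L:ℝ) ^ 2 * (1 + E)) :=
    mul_le_mul_of_nonneg_left h2 hβ
  calc -β * nlH L p J φ = β * (-(nlH L p J φ)) := by ring
    _ ≤ β * (J * (L:ℝ) ^ 2 * (1 + E)) := h3
    _ = β * J * (L:ℝ) ^ 2 * (1 + E) := by ring
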